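/- Let Q(x) be a monic polynomial of degree d+1 over a field of characteristic zero having d+1 distinct roots, and let F(x) be a polynomial of degree at most d. Then the sum over the roots α of Q of F(α) / Q'(α) equals the coefficient of x^d in F(x). In particular this value is independent of the choice of Q. -/

import Mathlib

open Polynomial

/-- Let `Q(x)` be a monic polynomial of degree `d+1` over a field of characteristic zero
having `d+1` distinct roots, and let `F(x)` be a polynomial of degree at most `d`.  Then the
sum over the roots `α` of `Q` of `F(α) / Q'(α)` equals the coefficient of `x^d` in `F(x)`;
in particular it is independent of the choice of `Q`. -/
theorem sum_eval_div_derivative_eval_eq_coeff {K : Type*} [Field K] [CharZero K] [DecidableEq K]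
    (d : ℕ) (Q F : K[X]) (hQ : Q.Monic) (hdeg : Q.natDegree = d + 1)
    (hroots : Q.roots.toFinset.card = d + 1) (hF : F.degree ≤ d) :
    ∑ α ∈ Q.roots.toFinset, F.eval α / (Polynomial.derivative Q).eval α = F.coeff d := by
  set s := Q.roots.toFinset with hs
  -- roots have full cardinality, hence Q splits and roots are nodup
  have hcard_le : Multiset.card Q.roots ≤ d + 1 := hdeg ▸ Q.card_roots'
  have hle : s.card ≤ Multiset.card Q.roots := Multiset.toFinset_card_le _
  have hcard : Multiset.card Q.roots = d + 1 :=
    le_antisymm hcard_le (hroots ▸ hle)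
  have hnodup : Q.roots.Nodup :=
    Multiset.toFinset_card_eq_card_iff_nodup.mp (by rw [hroots, hcard])
  have hsplits : Splits Q := splits_iff_card_roots.mpr (by rw [hcard, hdeg])
  -- Q is the nodal polynomial of its roots
  have hQnodal : Q = Lagrange.nodal s id := by
    rw [hsplits.eq_prod_roots_of_monic hQ, Lagrange.nodal]
    rw [Finset.prod_eq_multiset_prod]
    congr 1
    rw [hs, Multiset.toFinset_val, hnodup.dedup]
    simp
  have hvs : Set.InjOn (id : K → K) s := Function.injective_id.injOn
  have hscard : s.card = d + 1 := hroots
  -- F equals its Lagrange interpolation on s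
  have hFdeg : F.degree < s.card := by
    rw [hscard]
    exact lt_of_le_of_lt hF (by exact_mod_cast Nat.lt_succ_self d)
  have hFinterp : F = Lagrange.interpolate s id (fun x => F.eval x) :=
    Lagrange.eq_interpolate hvs hFdeg
  -- compute the d-th coefficient of the interpolation
  calc ∑ α ∈ s, F.eval α / (Polynomial.derivative Q).eval α
      = ∑ α ∈ s, F.eval α * Lagrange.nodalWeight s id α := by
        refine Finset.sum_congr rfl fun α hα => ?_
        rw [hQnodal, Lagrange.nodalWeight_eq_eval_derivative_nodal hα, div_eq_mul_inv]
        simp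
    _ = F.coeff d := by
        conv_rhs => rw [hFinterp]
        rw [Lagrange.interpolate_apply, finset_sum_coeff]
        refine Finset.sum_congr rfl fun α hα => ?_
        rw [coeff_C_mul]
        congr 1
        -- coeff d of basis = leading coefficient = nodalWeight
        have hnd : (Lagrange.basis s id α).natDegree = d :=
          by rw [Lagrange.natDegree_basis hvs hα, hscard, Nat.add_sub_cancel]
        have : (Lagrange.basis s id α).coeff d = (Lagrange.basis s id α).leadingCoeff := by
          rw [leadingCoeff, hnd]
        rw [this, Lagrange.basis, leadingCoeff_prod]
        rw [Lagrange.nodalWeight]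
        refine Finset.prod_congr rfl fun j hj => ?_
        rw [Lagrange.basisDivisor, leadingCoeff_mul, leadingCoeff_C,
          (monic_X_sub_C _).leadingCoeff, mul_one]
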